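/- arXiv:quant-ph/0611146 — 4 statements merged into one kernel-verified Lean document; each statement's English description precedes it below -/
import Mathlib

section
/- For one-qubit pure states ρ(u), ρ(v), ρ(w) with unit Bloch vectors u, v, w: d_B(ρ(w),ρ(u)) ≤ d_B(ρ(w),ρ(v)) if and only if |w − u| ≤ |w − v| (Euclidean distance in ℝ³). Hence Bures-Voronoi and Euclidean-Voronoi diagrams on the Bloch sphere coincide. -/
open Matrix
open scoped ComplexOrder InnerProductSpace

def IsDensity {d : ℕ} (ρ : Matrix (Fin d) (Fin d) ℂ) : Prop :=
  ρ.IsHermitian ∧ ρ.trace = 1 ∧ ρ.PosSemidef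

def IsPure {d : ℕ} (ρ : Matrix (Fin d) (Fin d) ℂ) : Prop :=
  IsDensity ρ ∧ ρ * ρ = ρ

noncomputable def matLog {d : ℕ} (A : Matrix (Fin d) (Fin d) ℂ) : Matrix (Fin d) (Fin d) ℂ :=
  if h : A.IsHermitian then
    (h.eigenvectorUnitary : Matrix (Fin d) (Fin d) ℂ) *
      Matrix.diagonal (fun i => (Real.log (h.eigenvalues i) : ℂ)) *
      (star (h.eigenvectorUnitary : Matrix (Fin d) (Fin d) ℂ))
  else 0

noncomputable def qDiv {d : ℕ} (σ ρ : Matrix (Fin d) (Fin d) ℂ) : ℝ :=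
  ((σ * (matLog σ - matLog ρ)).trace).re

noncomputable def rhoBloch (u : EuclideanSpace ℝ (Fin 3)) : Matrix (Fin 2) (Fin 2) ℂ :=
  !![(((1 + u 2) / 2 : ℝ) : ℂ), ((u 0 : ℂ) - Complex.I * (u 1 : ℂ)) / 2;
     ((u 0 : ℂ) + Complex.I * (u 1 : ℂ)) / 2, (((1 - u 2) / 2 : ℝ) : ℂ)]

noncomputable def dBpure {d : ℕ} (ρ σ : Matrix (Fin d) (Fin d) ℂ) : ℝ :=
  Real.sqrt (1 - ((ρ * σ).trace).re)

noncomputable def dFS {d : ℕ} (ρ σ : Matrix (Fin d) (Fin d) ℂ) : ℝ :=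
  Real.arccos (Real.sqrt (((ρ * σ).trace).re))

lemma trace_re (w u : EuclideanSpace ℝ (Fin 3)) :
    ((rhoBloch w * rhoBloch u).trace).re = (1 + ⟪w, u⟫_ℝ) / 2 := by
  simp [rhoBloch, Matrix.trace, Matrix.mul_apply, Fin.sum_univ_two, Fin.sum_univ_three,
    PiLp.inner_apply, Complex.add_re, Complex.mul_re, Complex.div_re]
  ring

lemma norm_sub_sq' (w u : EuclideanSpace ℝ (Fin 3)) (hw : ‖w‖ = 1) (hu : ‖u‖ = 1) :
    ‖w - u‖ ^ 2 = 2 - 2 * ⟪w, u⟫_ℝ := by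
  rw [norm_sub_sq_real, hw, hu]; ring

theorem stmt6 (u v w : EuclideanSpace ℝ (Fin 3))
    (hu : ‖u‖ = 1) (hv : ‖v‖ = 1) (hw : ‖w‖ = 1) :
    dBpure (rhoBloch w) (rhoBloch u) ≤ dBpure (rhoBloch w) (rhoBloch v) ↔
      ‖w - u‖ ≤ ‖w - v‖ := by
  have h1 : |⟪w, u⟫_ℝ| ≤ 1 := by
    simpa [hw, hu] using abs_real_inner_le_norm w u
  have h2 : |⟪w, v⟫_ℝ| ≤ 1 := by
    simpa [hw, hv] using abs_real_inner_le_norm w v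
  have key : dBpure (rhoBloch w) (rhoBloch u) ≤ dBpure (rhoBloch w) (rhoBloch v) ↔
      ⟪w, v⟫_ℝ ≤ ⟪w, u⟫_ℝ := by
    rw [dBpure, dBpure, trace_re, trace_re,
      Real.sqrt_le_sqrt_iff (by cases abs_le.mp h2; linarith)]
    constructor <;> intro h <;> linarith
  rw [key, ← Real.sqrt_sq (norm_nonneg (w - u)), ← Real.sqrt_sq (norm_nonneg (w - v)),
    Real.sqrt_le_sqrt_iff (by positivity), norm_sub_sq' w u hw hu, norm_sub_sq' w v hw hv]
  constructor <;> intro h <;> linarith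
end

section
/- Fix 0 < t < 1 and unit vectors u, v ∈ ℝ³. For one-qubit states ρ_t(u), ρ_t(v) with Bloch vectors tu, tv, the divergence bisector {σ : D(σ‖ρ_t(u)) = D(σ‖ρ_t(v))} equals {σ with Bloch vector w : w·u = w·v}, independent of t. Hence the limiting divergence-Voronoi diagram as sites tend to pure states coincides with the Euclidean Voronoi diagram. -/
open Matrix
open scoped ComplexOrder InnerProductSpace

/-! ### Auxiliary lemmas -/

lemma rhoBloch_isHermitian (x : EuclideanSpace ℝ (Fin 3)) : (rhoBloch x).IsHermitian := by
  unfold Matrix.IsHermitian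
  ext i j
  fin_cases i <;> fin_cases j <;>
    simp [rhoBloch, Matrix.conjTranspose_apply, Complex.ext_iff]

lemma trace_rhoBloch (x : EuclideanSpace ℝ (Fin 3)) : (rhoBloch x).trace = 1 := by
  simp [rhoBloch, Matrix.trace_fin_two]
  ring

lemma inner_euclid (w x : EuclideanSpace ℝ (Fin 3)) :
    ⟪w, x⟫_ℝ = w 0 * x 0 + w 1 * x 1 + w 2 * x 2 := by
  simp [PiLp.inner_apply, Fin.sum_univ_three]
  ring

lemma trace_mul_rhoBloch (w x : EuclideanSpace ℝ (Fin 3)) :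
    (rhoBloch w * rhoBloch x).trace = (((1 + ⟪w, x⟫_ℝ) / 2 : ℝ) : ℂ) := by
  rw [inner_euclid]
  simp [rhoBloch, Matrix.trace_fin_two, Matrix.mul_apply, Fin.sum_univ_two]
  push_cast
  ring_nf
  simp only [Complex.I_sq]
  ring

lemma unit_sq (u : EuclideanSpace ℝ (Fin 3)) (hu : ‖u‖ = 1) :
    u 0 ^ 2 + u 1 ^ 2 + u 2 ^ 2 = 1 := by
  have h := congrArg (· ^ 2) hu
  simp only [EuclideanSpace.norm_eq] at h
  rw [Real.sq_sqrt (by positivity)] at h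
  simpa [Fin.sum_univ_three, sq_abs] using h

lemma quad_rhoBloch (t : ℝ) (u : EuclideanSpace ℝ (Fin 3)) (hu : ‖u‖ = 1) :
    rhoBloch (t • u) * rhoBloch (t • u) =
      rhoBloch (t • u) - (((1 - t ^ 2) / 4 : ℝ) : ℂ) • 1 := by
  have hs : (u 0 : ℂ) ^ 2 + (u 1 : ℂ) ^ 2 + (u 2 : ℂ) ^ 2 = 1 := by
    have h1 := congrArg (fun r : ℝ => (r : ℂ)) (unit_sq u hu)
    simpa using h1
  have hsm : ∀ i, (t • u) i = t * u i := fun _ => rfl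
  ext i j
  fin_cases i <;> fin_cases j <;>
    · simp [rhoBloch, Matrix.mul_apply, Fin.sum_univ_two, Matrix.one_apply, hsm]
      ring_nf
      all_goals
        simp only [Complex.I_sq]
        first
        | linear_combination ((t:ℂ)^2/4) * hs
        | linear_combination (-(t:ℂ)^2/4) * hs
        | ring

lemma eig_mem (t : ℝ) (u : EuclideanSpace ℝ (Fin 3)) (hu : ‖u‖ = 1) (i : Fin 2) :
    (rhoBloch_isHermitian (t • u)).eigenvalues i = (1 + t) / 2 ∨
      (rhoBloch_isHermitian (t • u)).eigenvalues i = (1 - t) / 2 := by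
  have hq := quad_rhoBloch t u hu
  set A := rhoBloch (t • u) with hA
  set h := rhoBloch_isHermitian (t • u)
  set lam := h.eigenvalues i with hlam
  have hvec := h.mulVec_eigenvectorBasis i
  set x : Fin 2 → ℂ := ⇑(h.eigenvectorBasis i) with hx
  have hx0 : x ≠ 0 := by
    intro hcon
    have hk : ∀ k, (h.eigenvectorBasis i) k = 0 := fun k => congrFun hcon k
    have hn1 : ‖h.eigenvectorBasis i‖ = 1 := h.eigenvectorBasis.orthonormal.1 i
    rw [EuclideanSpace.norm_eq] at hn1
    simp [hk] at hn1
  obtain ⟨j, hj⟩ := Function.ne_iff.mp hx0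
  simp only [Pi.zero_apply] at hj
  have h2 : (A * A) *ᵥ x = A *ᵥ (A *ᵥ x) := by rw [Matrix.mulVec_mulVec]
  have key : ((lam : ℂ) ^ 2 - lam + ((1 - t ^ 2) / 4 : ℝ)) * x j = 0 := by
    have e1 : (A *ᵥ x) j = (lam : ℂ) * x j := by
      rw [hvec]; simp [Complex.real_smul, hlam]
    have e2 : ((A * A) *ᵥ x) j = (lam : ℂ) ^ 2 * x j := by
      rw [h2, hvec, Matrix.mulVec_smul, hvec]
      simp [Complex.real_smul]; ring
    have e3 : ((A * A) *ᵥ x) j = (lam : ℂ) * x j - ((1 - t ^ 2) / 4 : ℝ) * x j := by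
      rw [hq, Matrix.sub_mulVec, Matrix.smul_mulVec, Matrix.one_mulVec, Pi.sub_apply, e1]
      simp [e1, Complex.real_smul]
    rw [e3] at e2
    linear_combination -e2
  have hz : ((lam : ℂ) ^ 2 - lam + ((1 - t ^ 2) / 4 : ℝ)) = 0 :=
    (mul_eq_zero.mp key).resolve_right hj
  have hr : lam ^ 2 - lam + (1 - t ^ 2) / 4 = 0 := by exact_mod_cast hz
  have : (lam - (1 + t) / 2) * (lam - (1 - t) / 2) = 0 := by linear_combination hr
  rcases mul_eq_zero.mp this with h | h
  · left; linarith [sub_eq_zero.mp h]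
  · right; linarith [sub_eq_zero.mp h]

lemma matLog_affine {d : ℕ} (A : Matrix (Fin d) (Fin d) ℂ) (hA : A.IsHermitian) (α β : ℝ)
    (hev : ∀ i, Real.log (hA.eigenvalues i) = α + β * hA.eigenvalues i) :
    matLog A = (α : ℂ) • 1 + (β : ℂ) • A := by
  have hUU : (hA.eigenvectorUnitary : Matrix (Fin d) (Fin d) ℂ) *
      star (hA.eigenvectorUnitary : Matrix (Fin d) (Fin d) ℂ) = 1 :=
    (Matrix.mem_unitaryGroup_iff).mp (hA.eigenvectorUnitary).2
  have hdiag : Matrix.diagonal (fun i => (Real.log (hA.eigenvalues i) : ℂ)) =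
      (α : ℂ) • 1 + (β : ℂ) • Matrix.diagonal (RCLike.ofReal ∘ hA.eigenvalues) := by
    ext i j
    rcases eq_or_ne i j with rfl | hij
    · simp [hev i]
    · simp [Matrix.diagonal_apply_ne _ hij, Matrix.one_apply_ne hij]
  rw [matLog, dif_pos hA, hdiag]
  rw [Matrix.mul_add, Matrix.add_mul]
  rw [Matrix.mul_smul, Matrix.smul_mul, Matrix.mul_one, hUU]
  rw [Matrix.mul_smul, Matrix.smul_mul]
  conv_rhs => rw [hA.spectral_theorem, Unitary.conjStarAlgAut_apply]

lemma matLog_rhoBloch (t : ℝ) (ht0 : 0 < t) (ht1 : t < 1)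
    (u : EuclideanSpace ℝ (Fin 3)) (hu : ‖u‖ = 1) :
    matLog (rhoBloch (t • u)) =
      ((Real.log ((1 + t) / 2) -
          (Real.log ((1 + t) / 2) - Real.log ((1 - t) / 2)) / t * ((1 + t) / 2) : ℝ) : ℂ) • 1 +
        (((Real.log ((1 + t) / 2) - Real.log ((1 - t) / 2)) / t : ℝ) : ℂ) • rhoBloch (t • u) := by
  apply matLog_affine _ (rhoBloch_isHermitian (t • u))
  intro i
  have ht : t ≠ 0 := ne_of_gt ht0
  rcases eig_mem t u hu i with h | h <;> rw [h]
  · ring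
  · field_simp
    ring

theorem stmt10 (t : ℝ) (ht0 : 0 < t) (ht1 : t < 1)
    (u v : EuclideanSpace ℝ (Fin 3)) (hu : ‖u‖ = 1) (hv : ‖v‖ = 1) :
    ∀ w : EuclideanSpace ℝ (Fin 3), ‖w‖ ≤ 1 →
      (qDiv (rhoBloch w) (rhoBloch (t • u)) = qDiv (rhoBloch w) (rhoBloch (t • v)) ↔
        ⟪w, u⟫_ℝ = ⟪w, v⟫_ℝ) := by
  intro w _
  set β : ℝ := (Real.log ((1 + t) / 2) - Real.log ((1 - t) / 2)) / t with hβ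
  set α : ℝ := Real.log ((1 + t) / 2) - β * ((1 + t) / 2) with hα
  have hβpos : 0 < β := by
    apply div_pos _ ht0
    have : Real.log ((1 - t) / 2) < Real.log ((1 + t) / 2) :=
      Real.log_lt_log (by linarith) (by linarith)
    linarith
  have key : ∀ x : EuclideanSpace ℝ (Fin 3), ‖x‖ = 1 →
      qDiv (rhoBloch w) (rhoBloch (t • x)) =
        ((rhoBloch w * matLog (rhoBloch w)).trace).re
          - (α + β * ((1 + t * ⟪w, x⟫_ℝ) / 2)) := by
    intro x hx
    have hlog := matLog_rhoBloch t ht0 ht1 x hx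
    have hinner : ⟪w, t • x⟫_ℝ = t * ⟪w, x⟫_ℝ := real_inner_smul_right w x t
    have htr : (rhoBloch w * matLog (rhoBloch (t • x))).trace
        = (((α + β * ((1 + t * ⟪w, x⟫_ℝ) / 2)) : ℝ) : ℂ) := by
      rw [hlog, Matrix.mul_add, Matrix.trace_add, Matrix.mul_smul, Matrix.mul_smul,
        Matrix.trace_smul, Matrix.trace_smul, Matrix.mul_one, trace_rhoBloch,
        trace_mul_rhoBloch, hinner]
      have htC : (t : ℂ) ≠ 0 := by exact_mod_cast ne_of_gt ht0
      have htR : t ≠ 0 := ne_of_gt ht0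
      simp only [smul_eq_mul, hα, hβ]
      push_cast
      first
      | (field_simp; ring)
      | field_simp
    rw [qDiv, Matrix.mul_sub, Matrix.trace_sub, Complex.sub_re, htr, Complex.ofReal_re]
  rw [key u hu, key v hv]
  constructor
  · intro h
    have h2 : β * (t * ⟪w, u⟫_ℝ) = β * (t * ⟪w, v⟫_ℝ) := by linarith
    have := mul_left_cancel₀ (ne_of_gt hβpos) h2
    exact mul_left_cancel₀ (ne_of_gt ht0) this
  · intro h
    rw [h]
end

section
/- For density matrices ρ, σ with ρ positive definite, D(σ‖ρ) = Tr σ(log σ − log ρ) ≥ 0, with equality if and only if σ = ρ (Klein's inequality / quantum relative entropy nonnegativity). -/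
open Matrix
open scoped ComplexOrder InnerProductSpace

private lemma klein_scalar (x y : ℝ) (hx : 0 ≤ x) (hy : 0 < y) :
    0 ≤ x * Real.log x - x * Real.log y - x + y ∧
      ((x * Real.log x - x * Real.log y - x + y = 0) ↔ x = y) := by
  rcases hx.eq_or_lt with h | h
  · simp only [← h, zero_mul, sub_zero, sub_self, zero_sub, neg_zero, zero_add]
    exact ⟨hy.le, by constructor <;> intro h0 <;> [exact absurd h0 hy.ne'; exact absurd h0.symm hy.ne']⟩
  · have hyx : 0 < y / x := by positivity
    have key : Real.log (y / x) ≤ y / x - 1 := Real.log_le_sub_one_of_pos hyx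
    have hlog : Real.log (y / x) = Real.log y - Real.log x := Real.log_div hy.ne' h.ne'
    have hxy : x * (y / x) = y := by field_simp
    have hmain := mul_le_mul_of_nonneg_left key h.le
    rw [hlog] at hmain
    constructor
    · nlinarith
    · constructor
      · intro h0
        by_contra hne
        have hne1 : y / x ≠ 1 := fun hc => hne ((div_eq_one_iff_eq h.ne').mp hc).symm
        have hstrict := Real.log_lt_sub_one_of_pos hyx hne1
        rw [hlog] at hstrict
        nlinarith
      · intro h0; subst h0; ring

private lemma trace_diag_conj {d : ℕ} (W : Matrix (Fin d) (Fin d) ℂ) (f g : Fin d → ℂ) :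
    (diagonal f * W * diagonal g * Wᴴ).trace = ∑ i, ∑ j, f i * g j * (W i j * star (W i j)) := by
  simp [Matrix.trace, Matrix.diag, Matrix.mul_apply, Matrix.diagonal_apply, Finset.mul_sum,
    Finset.sum_mul, conjTranspose_apply]
  congr 1; ext i; congr 1; ext j; ring

private lemma trace_conj_cycle {d : ℕ} (U D M : Matrix (Fin d) (Fin d) ℂ) :
    (U * D * star U * M).trace = (D * (star U * M * U)).trace := by
  rw [Matrix.mul_assoc, Matrix.mul_assoc, Matrix.trace_mul_comm]
  simp only [Matrix.mul_assoc]

private lemma row_sum_one {d : ℕ} {W : Matrix (Fin d) (Fin d) ℂ}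
    (hW : W * Wᴴ = 1) (i : Fin d) : ∑ j, Complex.normSq (W i j) = 1 := by
  have h2 : (∑ j, (Complex.normSq (W i j) : ℂ)) = 1 := by
    simpa [Matrix.mul_apply, conjTranspose_apply, Complex.mul_conj] using
      congrFun (congrFun hW i) i
  exact_mod_cast h2

private lemma col_sum_one {d : ℕ} {W : Matrix (Fin d) (Fin d) ℂ}
    (hW : Wᴴ * W = 1) (j : Fin d) : ∑ i, Complex.normSq (W i j) = 1 := by
  have h2 : (∑ i, (Complex.normSq (W i j) : ℂ)) = 1 := by
    have := congrFun (congrFun hW j) j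
    simp only [Matrix.mul_apply, conjTranspose_apply, Matrix.one_apply_eq] at this
    rw [← this]
    exact Finset.sum_congr rfl fun i _ => by rw [Complex.normSq_eq_conj_mul_self]; rfl
  exact_mod_cast h2

private lemma qDiv_formula {d : ℕ} (σ ρ : Matrix (Fin d) (Fin d) ℂ)
    (hσH : σ.IsHermitian) (hρH : ρ.IsHermitian) :
    qDiv σ ρ = (∑ i, hσH.eigenvalues i * Real.log (hσH.eigenvalues i))
      - ∑ i, ∑ j, hσH.eigenvalues i * Real.log (hρH.eigenvalues j) *
          Complex.normSq ((star (hσH.eigenvectorUnitary : Matrix (Fin d) (Fin d) ℂ) *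
            (hρH.eigenvectorUnitary : Matrix (Fin d) (Fin d) ℂ)) i j) := by
  set U : Matrix (Fin d) (Fin d) ℂ := (hσH.eigenvectorUnitary : Matrix (Fin d) (Fin d) ℂ) with hUdef
  set V : Matrix (Fin d) (Fin d) ℂ := (hρH.eigenvectorUnitary : Matrix (Fin d) (Fin d) ℂ) with hVdef
  have hU1 : star U * U = 1 := hσH.eigenvectorUnitary.2.1
  have hU2 : U * star U = 1 := hσH.eigenvectorUnitary.2.2
  have hV1 : star V * V = 1 := hρH.eigenvectorUnitary.2.1
  have hmlσ : matLog σ = U * diagonal (fun i => (Real.log (hσH.eigenvalues i) : ℂ)) * star U := by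
    rw [matLog, dif_pos hσH]
  have hmlρ : matLog ρ = V * diagonal (fun i => (Real.log (hρH.eigenvalues i) : ℂ)) * star V := by
    rw [matLog, dif_pos hρH]
  set P : Matrix (Fin d) (Fin d) ℂ := diagonal (fun i => (hσH.eigenvalues i : ℂ)) with hPdef
  set Lσ : Matrix (Fin d) (Fin d) ℂ := diagonal (fun i => (Real.log (hσH.eigenvalues i) : ℂ))
  set Lρ : Matrix (Fin d) (Fin d) ℂ := diagonal (fun i => (Real.log (hρH.eigenvalues i) : ℂ))
  have hσeq : σ = U * P * star U := by
    have := hσH.spectral_theorem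
    simp at this
    exact this
  have hkey : σ * (matLog σ - matLog ρ) = (U * P * star U) *
      ((U * Lσ * star U) - (V * Lρ * star V)) := by
    rw [hmlσ, hmlρ, ← hσeq]
  have t1 : ((U * P * star U) * (U * Lσ * star U)).trace
      = ∑ i, ((hσH.eigenvalues i : ℂ) * (Real.log (hσH.eigenvalues i) : ℂ)) := by
    rw [trace_conj_cycle]
    have : star U * (U * Lσ * star U) * U = Lσ := by
      rw [← Matrix.mul_assoc, ← Matrix.mul_assoc, hU1, Matrix.one_mul, Matrix.mul_assoc, hU1,
        Matrix.mul_one]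
    rw [this, hPdef, diagonal_mul_diagonal, trace_diagonal]
  have t2 : ((U * P * star U) * (V * Lρ * star V)).trace
      = ∑ i, ∑ j, (hσH.eigenvalues i : ℂ) * (Real.log (hρH.eigenvalues j) : ℂ) *
      (((star U * V) i j) * star ((star U * V) i j)) := by
    rw [trace_conj_cycle]
    have hassoc : star U * (V * Lρ * star V) * U = (star U * V) * Lρ * (star U * V)ᴴ := by
      rw [conjTranspose_mul]
      simp only [Matrix.star_eq_conjTranspose, conjTranspose_conjTranspose, Matrix.mul_assoc]
    rw [hassoc, ← Matrix.mul_assoc, ← Matrix.mul_assoc, hPdef, trace_diag_conj]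
  rw [qDiv, hkey, Matrix.mul_sub, Matrix.trace_sub, Complex.sub_re, t1, t2]
  congr 1
  · rw [Complex.re_sum]
    exact Finset.sum_congr rfl fun i _ => by simp
  · rw [Complex.re_sum]
    refine Finset.sum_congr rfl fun i _ => ?_
    rw [Complex.re_sum]
    refine Finset.sum_congr rfl fun j _ => ?_
    have : ((star U * V) i j) * star ((star U * V) i j) =
        (Complex.normSq ((star U * V) i j) : ℂ) := Complex.mul_conj _
    rw [this]
    simp

private lemma sum_eigenvalues_eq_one {d : ℕ} {σ : Matrix (Fin d) (Fin d) ℂ}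
    (hσH : σ.IsHermitian) (htr : σ.trace = 1) : ∑ i, hσH.eigenvalues i = 1 := by
  have hU1 : star (hσH.eigenvectorUnitary : Matrix (Fin d) (Fin d) ℂ) *
      (hσH.eigenvectorUnitary : Matrix (Fin d) (Fin d) ℂ) = 1 := hσH.eigenvectorUnitary.2.1
  have hs := hσH.spectral_theorem
  simp at hs
  rw [hs] at htr
  rw [Matrix.trace_mul_cycle, hU1, Matrix.one_mul, trace_diagonal] at htr
  have h2 : (∑ i, (hσH.eigenvalues i : ℂ)) = 1 := by simpa [Function.comp] using htr
  exact_mod_cast h2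

theorem stmt13 {d : ℕ} (ρ σ : Matrix (Fin d) (Fin d) ℂ)
    (hρ : IsDensity ρ) (hσ : IsDensity σ) (hρpd : ρ.PosDef) :
    0 ≤ qDiv σ ρ ∧ (qDiv σ ρ = 0 ↔ σ = ρ) := by
  obtain ⟨hρH, hρtr, hρpsd⟩ := hρ
  obtain ⟨hσH, hσtr, hσpsd⟩ := hσ
  set U : Matrix (Fin d) (Fin d) ℂ := (hσH.eigenvectorUnitary : Matrix (Fin d) (Fin d) ℂ) with hUdef
  set V : Matrix (Fin d) (Fin d) ℂ := (hρH.eigenvectorUnitary : Matrix (Fin d) (Fin d) ℂ) with hVdef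
  set W : Matrix (Fin d) (Fin d) ℂ := star U * V with hWdef
  set p : Fin d → ℝ := hσH.eigenvalues with hpdef
  set q : Fin d → ℝ := hρH.eigenvalues with hqdef
  have hp0 : ∀ i, 0 ≤ p i := fun i => hσpsd.eigenvalues_nonneg i
  have hq0 : ∀ j, 0 < q j := fun j => hρpd.eigenvalues_pos j
  have hU1 : star U * U = 1 := hσH.eigenvectorUnitary.2.1
  have hU2 : U * star U = 1 := hσH.eigenvectorUnitary.2.2
  have hV1 : star V * V = 1 := hρH.eigenvectorUnitary.2.1
  have hV2 : V * star V = 1 := hρH.eigenvectorUnitary.2.2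
  have hWmem : W ∈ unitary (Matrix (Fin d) (Fin d) ℂ) :=
    mul_mem (Unitary.star_mem hσH.eigenvectorUnitary.2) hρH.eigenvectorUnitary.2
  have hWr : W * Wᴴ = 1 := hWmem.2
  have hWc : Wᴴ * W = 1 := hWmem.1
  have hrow : ∀ i, ∑ j, Complex.normSq (W i j) = 1 := row_sum_one hWr
  have hcol : ∀ j, ∑ i, Complex.normSq (W i j) = 1 := col_sum_one hWc
  have hsp : ∑ i, p i = 1 := sum_eigenvalues_eq_one hσH hσtr
  have hsq : ∑ j, q j = 1 := sum_eigenvalues_eq_one hρH hρtr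
  -- main formula
  have hform : qDiv σ ρ = ∑ i, ∑ j, Complex.normSq (W i j) *
      (p i * Real.log (p i) - p i * Real.log (q j) - p i + q j) := by
    rw [qDiv_formula σ ρ hσH hρH]
    have e1 : (∑ i, p i * Real.log (p i))
        = ∑ i, ∑ j, Complex.normSq (W i j) * (p i * Real.log (p i)) := by
      refine Finset.sum_congr rfl fun i _ => ?_
      rw [← Finset.sum_mul, hrow i, one_mul]
    have e2 : (∑ i, ∑ j, Complex.normSq (W i j) * (p i)) = 1 := by
      have : ∀ i, (∑ j, Complex.normSq (W i j) * p i) = p i := fun i => by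
        rw [← Finset.sum_mul, hrow i, one_mul]
      simp only [this, hsp]
    have e3 : (∑ i, ∑ j, Complex.normSq (W i j) * (q j)) = 1 := by
      rw [Finset.sum_comm]
      have : ∀ j, (∑ i, Complex.normSq (W i j) * q j) = q j := fun j => by
        rw [← Finset.sum_mul, hcol j, one_mul]
      simp only [this, hsq]
    have expand : (∑ i, ∑ j, Complex.normSq (W i j) *
        (p i * Real.log (p i) - p i * Real.log (q j) - p i + q j))
        = (∑ i, ∑ j, Complex.normSq (W i j) * (p i * Real.log (p i)))
          - (∑ i, ∑ j, p i * Real.log (q j) * Complex.normSq (W i j))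
          - (∑ i, ∑ j, Complex.normSq (W i j) * (p i))
          + (∑ i, ∑ j, Complex.normSq (W i j) * (q j)) := by
      rw [← Finset.sum_sub_distrib, ← Finset.sum_sub_distrib, ← Finset.sum_add_distrib]
      refine Finset.sum_congr rfl fun i _ => ?_
      rw [← Finset.sum_sub_distrib, ← Finset.sum_sub_distrib, ← Finset.sum_add_distrib]
      refine Finset.sum_congr rfl fun j _ => ?_
      ring
    rw [expand, e2, e3, ← e1]
    ring
  have hterm : ∀ i j, 0 ≤ Complex.normSq (W i j) *
      (p i * Real.log (p i) - p i * Real.log (q j) - p i + q j) := fun i j =>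
    mul_nonneg (Complex.normSq_nonneg _) (klein_scalar (p i) (q j) (hp0 i) (hq0 j)).1
  have hnonneg : 0 ≤ qDiv σ ρ := by
    rw [hform]
    exact Finset.sum_nonneg fun i _ => Finset.sum_nonneg fun j _ => hterm i j
  refine ⟨hnonneg, ?_, ?_⟩
  · -- qDiv = 0 → σ = ρ
    intro h0
    rw [hform] at h0
    have hz : ∀ i ∈ Finset.univ, ∀ j ∈ Finset.univ, Complex.normSq (W i j) *
        (p i * Real.log (p i) - p i * Real.log (q j) - p i + q j) = 0 := by
      intro i _
      have := (Finset.sum_eq_zero_iff_of_nonneg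
        (fun i _ => Finset.sum_nonneg fun j _ => hterm i j)).mp h0 i (Finset.mem_univ i)
      exact fun j hj => (Finset.sum_eq_zero_iff_of_nonneg (fun j _ => hterm i j)).mp this j hj
    have hWpq : ∀ i j, W i j ≠ 0 → p i = q j := by
      intro i j hW
      have := hz i (Finset.mem_univ i) j (Finset.mem_univ j)
      rcases mul_eq_zero.mp this with h | h
      · exact absurd (Complex.normSq_eq_zero.mp h) hW
      · exact (klein_scalar (p i) (q j) (hp0 i) (hq0 j)).2.mp h
    have hDW : diagonal (fun i => (p i : ℂ)) * W = W * diagonal (fun j => (q j : ℂ)) := by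
      ext i j
      rw [diagonal_mul, mul_diagonal]
      rcases eq_or_ne (W i j) 0 with h | h
      · rw [h, mul_zero, zero_mul]
      · rw [hWpq i j h, mul_comm]
    have hσeq : σ = U * diagonal (fun i => (p i : ℂ)) * star U := by
      have h := hσH.spectral_theorem
      simp at h
      exact h
    have hρeq : ρ = V * diagonal (fun j => (q j : ℂ)) * star V := by
      have h := hρH.spectral_theorem
      simp at h
      exact h
    have hPW : diagonal (fun i => (p i : ℂ)) = W * diagonal (fun j => (q j : ℂ)) * Wᴴ := by
      rw [← hDW, Matrix.mul_assoc, hWr, Matrix.mul_one]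
    rw [hσeq, hρeq, hPW]
    have hUW : U * W = V := by
      rw [hWdef, ← Matrix.mul_assoc, hU2, Matrix.one_mul]
    have hWU : Wᴴ * star U = star V := by
      rw [hWdef]
      rw [conjTranspose_mul]
      simp only [Matrix.star_eq_conjTranspose, conjTranspose_conjTranspose]
      rw [Matrix.mul_assoc]
      rw [show U * Uᴴ = (1 : Matrix (Fin d) (Fin d) ℂ) from by
        simpa [Matrix.star_eq_conjTranspose] using hU2]
      rw [Matrix.mul_one]
    calc U * (W * diagonal (fun j => (q j : ℂ)) * Wᴴ) * star U
        = (U * W) * diagonal (fun j => (q j : ℂ)) * (Wᴴ * star U) := by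
          simp only [Matrix.mul_assoc]
      _ = V * diagonal (fun j => (q j : ℂ)) * star V := by rw [hUW, hWU]
  · -- σ = ρ → qDiv = 0
    intro h; subst h
    simp [qDiv]
end

section
/- For pure states σ, ρ, ρ̃ and ε ∈ (0,1), let ρ_ε = (1−ε)ρ + (ε/d)I and ρ̃_ε = (1−ε)ρ̃ + (ε/d)I. Then D(σ‖ρ_ε) − D(σ‖ρ̃_ε) = −Tr σ(log ρ_ε − log ρ̃_ε), and as ε → 0 this tends to (log((1−ε)d/ε + 1)-scaled) sign determined by Tr(σρ) − Tr(σρ̃); in particular the limiting divergence-Voronoi diagram with pure sites coincides with the Bures (and Fubini–Study) Voronoi diagram restricted to pure σ. -/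
open Matrix
open scoped ComplexOrder InnerProductSpace

noncomputable def mixWith {d : ℕ} (ρ : Matrix (Fin d) (Fin d) ℂ) (ε : ℝ) :
    Matrix (Fin d) (Fin d) ℂ :=
  ((1 - ε : ℝ) : ℂ) • ρ + ((ε : ℂ) / (d : ℂ)) • (1 : Matrix (Fin d) (Fin d) ℂ)

lemma matLog_aux {d : ℕ} {A : Matrix (Fin d) (Fin d) ℂ} (hA : A.IsHermitian)
    {a b : ℝ} (hab : a ≠ b)
    (h : (A - (a : ℂ) • 1) * (A - (b : ℂ) • 1) = 0) (i : Fin d) :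
    hA.eigenvalues i = a ∨ hA.eigenvalues i = b := by
  set U : Matrix (Fin d) (Fin d) ℂ := (hA.eigenvectorUnitary : Matrix (Fin d) (Fin d) ℂ)
  have hU1 : U * star U = 1 := (Matrix.mem_unitaryGroup_iff).mp hA.eigenvectorUnitary.2
  have hU2 : star U * U = 1 := (Matrix.mem_unitaryGroup_iff').mp hA.eigenvectorUnitary.2
  set D : Matrix (Fin d) (Fin d) ℂ := Matrix.diagonal (RCLike.ofReal ∘ hA.eigenvalues)
  have hspec : A = U * D * star U := hA.spectral_theorem
  have h1 : A - (a : ℂ) • 1 = U * (D - (a:ℂ) • 1) * star U := by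
    rw [mul_sub, sub_mul, hspec, Matrix.mul_smul, mul_one, Matrix.smul_mul, hU1]
  have h2 : A - (b : ℂ) • 1 = U * (D - (b:ℂ) • 1) * star U := by
    rw [mul_sub, sub_mul, hspec, Matrix.mul_smul, mul_one, Matrix.smul_mul, hU1]
  have key : (D - (a:ℂ) • 1) * (D - (b:ℂ) • 1) = 0 := by
    have : U * ((D - (a:ℂ) • 1) * (D - (b:ℂ) • 1)) * star U = 0 := by
      calc U * ((D - (a:ℂ) • 1) * (D - (b:ℂ) • 1)) * star U
          = (U * (D - (a:ℂ) • 1) * star U) * (U * (D - (b:ℂ) • 1) * star U) := by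
            rw [mul_assoc, mul_assoc, mul_assoc, mul_assoc]
            congr 2
            rw [← mul_assoc, ← mul_assoc, hU2, one_mul]
        _ = 0 := by rw [← h1, ← h2, h]
    calc (D - (a:ℂ) • 1) * (D - (b:ℂ) • 1)
        = star U * (U * ((D - (a:ℂ) • 1) * (D - (b:ℂ) • 1)) * star U) * U := by
          rw [mul_assoc, mul_assoc, hU2, mul_one, ← mul_assoc, ← mul_assoc, hU2, one_mul]
      _ = 0 := by rw [this]; simp
  have : ((hA.eigenvalues i : ℂ) - a) * ((hA.eigenvalues i : ℂ) - b) = 0 := by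
    have := congrFun (congrFun key i) i
    simp only [D, Matrix.mul_apply, Matrix.sub_apply, Matrix.diagonal_apply,
      Matrix.one_apply, Matrix.zero_apply, Function.comp] at this
    rw [Finset.sum_eq_single i] at this
    · simpa using this
    · intro j _ hj; simp [hj, Ne.symm hj]
    · simp
  rcases mul_eq_zero.mp this with h' | h'
  · left; exact_mod_cast sub_eq_zero.mp h'
  · right; exact_mod_cast sub_eq_zero.mp h'

lemma matLog_affine_s14 {d : ℕ} {A : Matrix (Fin d) (Fin d) ℂ} (hA : A.IsHermitian)
    {a b c₀ c₁ : ℝ} (hab : a ≠ b)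
    (h : (A - (a : ℂ) • 1) * (A - (b : ℂ) • 1) = 0)
    (ha : Real.log a = c₀ + c₁ * a) (hb : Real.log b = c₀ + c₁ * b) :
    matLog A = (c₀ : ℂ) • 1 + (c₁ : ℂ) • A := by
  rw [matLog, dif_pos hA]
  set U : Matrix (Fin d) (Fin d) ℂ := (hA.eigenvectorUnitary : Matrix (Fin d) (Fin d) ℂ)
  have hU1 : U * star U = 1 := (Matrix.mem_unitaryGroup_iff).mp hA.eigenvectorUnitary.2
  have hdiag : Matrix.diagonal (fun i => (Real.log (hA.eigenvalues i) : ℂ)) =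
      (c₀ : ℂ) • 1 + (c₁ : ℂ) • Matrix.diagonal (RCLike.ofReal ∘ hA.eigenvalues) := by
    ext i j
    rcases eq_or_ne i j with rfl | hij
    · rcases matLog_aux hA hab h i with h' | h' <;>
        simp [Matrix.diagonal_apply, Matrix.one_apply, h', ha, hb] <;> push_cast <;> ring
    · simp [Matrix.diagonal_apply, Matrix.one_apply, hij]
  rw [hdiag, mul_add, add_mul, Matrix.mul_smul, Matrix.mul_smul, Matrix.smul_mul,
    Matrix.smul_mul, mul_one, hU1,
    ← (show A = U * Matrix.diagonal (RCLike.ofReal ∘ hA.eigenvalues) * star U from hA.spectral_theorem)]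

lemma mixWith_herm {d : ℕ} {ρ : Matrix (Fin d) (Fin d) ℂ} (hρ : ρ.IsHermitian) (ε : ℝ) :
    (mixWith ρ ε).IsHermitian := by
  unfold Matrix.IsHermitian mixWith
  rw [conjTranspose_add, conjTranspose_smul, conjTranspose_smul, hρ.eq, conjTranspose_one]
  congr 1
  · congr 1; simp
  · congr 1; rw [star_div₀]; simp

lemma mixWith_quad {d : ℕ} (hd : 0 < d) {ρ : Matrix (Fin d) (Fin d) ℂ} (hρ : ρ * ρ = ρ)
    {ε : ℝ} :
    (mixWith ρ ε - ((1 - ε + ε / d : ℝ) : ℂ) • 1) * (mixWith ρ ε - ((ε / d : ℝ) : ℂ) • 1)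
      = 0 := by
  have hd' : (d : ℂ) ≠ 0 := Nat.cast_ne_zero.mpr hd.ne'
  have h1 : mixWith ρ ε - ((ε / d : ℝ) : ℂ) • 1 = ((1 - ε : ℝ) : ℂ) • ρ := by
    unfold mixWith
    have : (((ε / d : ℝ)) : ℂ) = (ε : ℂ) / (d : ℂ) := by push_cast; ring
    rw [this]; abel
  have h2 : mixWith ρ ε - ((1 - ε + ε / d : ℝ) : ℂ) • 1
      = ((1 - ε : ℝ) : ℂ) • ρ - ((1 - ε : ℝ) : ℂ) • 1 := by
    unfold mixWith
    have : (((1 - ε + ε / d : ℝ)) : ℂ) • (1 : Matrix (Fin d) (Fin d) ℂ)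
        = ((1 - ε : ℝ) : ℂ) • 1 + ((ε : ℂ) / (d : ℂ)) • 1 := by
      rw [← add_smul]; congr 1; push_cast; ring
    rw [this]; abel
  rw [h1, h2, sub_mul, Matrix.smul_mul, Matrix.smul_mul, Matrix.mul_smul, hρ, one_mul]
  simp

lemma matLog_mixWith {d : ℕ} (hd : 0 < d) {ρ : Matrix (Fin d) (Fin d) ℂ}
    (hρh : ρ.IsHermitian) (hρ2 : ρ * ρ = ρ) {ε : ℝ} (hε0 : 0 < ε) (hε1 : ε < 1) :
    matLog (mixWith ρ ε) =
      ((Real.log (ε/d) - (Real.log (((1-ε)*d+ε)/ε) / (1-ε)) * (ε/d) : ℝ) : ℂ) • 1 +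
      ((Real.log (((1-ε)*d+ε)/ε) / (1-ε) : ℝ) : ℂ) • mixWith ρ ε := by
  have hdR : (0:ℝ) < d := Nat.cast_pos.mpr hd
  have h1ε : (0:ℝ) < 1 - ε := by linarith
  have ha0 : (0:ℝ) < 1 - ε + ε/d := by positivity
  have hb0 : (0:ℝ) < ε/d := by positivity
  have hab : (1 - ε + ε/d : ℝ) ≠ ε/d := by intro h; nlinarith
  have hL : Real.log (((1-ε)*d+ε)/ε) = Real.log (1-ε+ε/d) - Real.log (ε/d) := by
    rw [← Real.log_div (by positivity) hb0.ne']
    congr 1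
    field_simp
  refine matLog_affine_s14 (mixWith_herm hρh ε) hab (mixWith_quad hd hρ2) ?_ ?_
  · rw [hL]; field_simp; ring
  · rw [hL]; field_simp; ring

lemma matLog_mixWith_sub {d : ℕ} (hd : 0 < d) {ρ ρ' : Matrix (Fin d) (Fin d) ℂ}
    (hρh : ρ.IsHermitian) (hρ2 : ρ * ρ = ρ)
    (hρh' : ρ'.IsHermitian) (hρ2' : ρ' * ρ' = ρ') {ε : ℝ} (hε0 : 0 < ε) (hε1 : ε < 1) :
    matLog (mixWith ρ ε) - matLog (mixWith ρ' ε) =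
      ((Real.log (((1-ε)*d+ε)/ε) : ℝ) : ℂ) • (ρ - ρ') := by
  have h1ε : (1:ℝ) - ε ≠ 0 := by linarith
  rw [matLog_mixWith hd hρh hρ2 hε0 hε1, matLog_mixWith hd hρh' hρ2' hε0 hε1]
  have hmix : mixWith ρ ε - mixWith ρ' ε = ((1 - ε : ℝ) : ℂ) • (ρ - ρ') := by
    unfold mixWith; rw [smul_sub]; abel
  calc _ = ((Real.log (((1-ε)*d+ε)/ε) / (1-ε) : ℝ) : ℂ) • (mixWith ρ ε - mixWith ρ' ε) := by
        rw [smul_sub]; abel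
    _ = _ := by
        rw [hmix, smul_smul]
        congr 1
        rw [← Complex.ofReal_mul]
        congr 1
        field_simp

lemma psd_trace_re_nonneg {d : ℕ} {A : Matrix (Fin d) (Fin d) ℂ} (hA : A.PosSemidef) :
    0 ≤ A.trace.re := by
  simp only [Matrix.trace, Matrix.diag, Complex.re_sum]
  apply Finset.sum_nonneg
  intro i _
  have := hA.re_dotProduct_nonneg (Pi.single i 1)
  simpa [dotProduct, Matrix.mulVec, Pi.single_apply, Finset.sum_ite_eq] using this

lemma mul_trace_re_nonneg {d : ℕ} {A B : Matrix (Fin d) (Fin d) ℂ}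
    (hA : A.PosSemidef) (hB : B.PosSemidef) : 0 ≤ ((A * B).trace).re := by
  obtain ⟨C, hC⟩ : ∃ C : Matrix (Fin d) (Fin d) ℂ, B = Cᴴ * C := by
    open scoped MatrixOrder in
    exact CStarAlgebra.nonneg_iff_eq_star_mul_self.mp hB.nonneg
  rw [hC, ← Matrix.mul_assoc, Matrix.trace_mul_cycle]
  exact psd_trace_re_nonneg (hA.mul_mul_conjTranspose_same C)

lemma pure_overlap_mem {d : ℕ} {A B : Matrix (Fin d) (Fin d) ℂ}
    (hA : IsPure A) (hB : IsPure B) :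
    0 ≤ ((A * B).trace).re ∧ ((A * B).trace).re ≤ 1 := by
  obtain ⟨⟨hAh, hAt, hAp⟩, hA2⟩ := hA
  obtain ⟨⟨hBh, hBt, hBp⟩, hB2⟩ := hB
  refine ⟨mul_trace_re_nonneg hAp hBp, ?_⟩
  have h1B : (1 - B : Matrix (Fin d) (Fin d) ℂ).PosSemidef := by
    have : (1 - B : Matrix (Fin d) (Fin d) ℂ) = (1 - B)ᴴ * (1 - B) := by
      rw [conjTranspose_sub, conjTranspose_one, hBh.eq, sub_mul, one_mul, mul_sub,
        mul_one, hB2]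
      abel
    rw [this]
    exact Matrix.posSemidef_conjTranspose_mul_self _
  have := mul_trace_re_nonneg hAp h1B
  rw [Matrix.mul_sub, Matrix.mul_one, Matrix.trace_sub, Complex.sub_re] at this
  have hre : A.trace.re = 1 := by rw [hAt]; simp
  linarith

theorem stmt14 {d : ℕ} (hd : 0 < d) (σ ρ ρ' : Matrix (Fin d) (Fin d) ℂ)
    (hσ : IsPure σ) (hρ : IsPure ρ) (hρ' : IsPure ρ')
    (ε : ℝ) (hε0 : 0 < ε) (hε1 : ε < 1) :
    qDiv σ (mixWith ρ ε) - qDiv σ (mixWith ρ' ε) =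
      -(((σ * (matLog (mixWith ρ ε) - matLog (mixWith ρ' ε))).trace).re) ∧
    qDiv σ (mixWith ρ ε) - qDiv σ (mixWith ρ' ε) =
      Real.log (((1 - ε) * d + ε) / ε) * (((σ * ρ').trace).re - ((σ * ρ).trace).re) ∧
    (qDiv σ (mixWith ρ ε) ≤ qDiv σ (mixWith ρ' ε) ↔ dBpure σ ρ ≤ dBpure σ ρ') ∧
    (qDiv σ (mixWith ρ ε) ≤ qDiv σ (mixWith ρ' ε) ↔ dFS σ ρ ≤ dFS σ ρ') := by
  set L := Real.log (((1 - ε) * d + ε) / ε) with hLdef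
  set x := ((σ * ρ).trace).re with hxdef
  set x' := ((σ * ρ').trace).re with hx'def
  have hfirst : qDiv σ (mixWith ρ ε) - qDiv σ (mixWith ρ' ε) =
      -(((σ * (matLog (mixWith ρ ε) - matLog (mixWith ρ' ε))).trace).re) := by
    unfold qDiv
    rw [← Complex.sub_re, ← Matrix.trace_sub, ← Matrix.mul_sub]
    have h : (matLog σ - matLog (mixWith ρ ε)) - (matLog σ - matLog (mixWith ρ' ε))
        = -(matLog (mixWith ρ ε) - matLog (mixWith ρ' ε)) := by abel
    rw [h, Matrix.mul_neg, Matrix.trace_neg, Complex.neg_re]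
  have hsub : matLog (mixWith ρ ε) - matLog (mixWith ρ' ε) = ((L : ℝ) : ℂ) • (ρ - ρ') :=
    matLog_mixWith_sub hd hρ.1.1 hρ.2 hρ'.1.1 hρ'.2 hε0 hε1
  have hkey : qDiv σ (mixWith ρ ε) - qDiv σ (mixWith ρ' ε) = L * (x' - x) := by
    rw [hfirst, hsub, Matrix.mul_smul, Matrix.trace_smul, Matrix.mul_sub,
      Matrix.trace_sub]
    simp [Complex.sub_re, Complex.ofReal_mul]
    ring
  have hL : 0 < L := by
    apply Real.log_pos
    rw [lt_div_iff₀ hε0]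
    have : (0:ℝ) < (1 - ε) * d := by
      have : (0:ℝ) < (d:ℝ) := Nat.cast_pos.mpr hd
      nlinarith
    linarith
  obtain ⟨hx0, hx1⟩ := pure_overlap_mem hσ hρ
  obtain ⟨hx0', hx1'⟩ := pure_overlap_mem hσ hρ'
  have hcent : qDiv σ (mixWith ρ ε) ≤ qDiv σ (mixWith ρ' ε) ↔ x' ≤ x := by
    constructor
    · intro h
      have : L * (x' - x) ≤ 0 := by linarith [hkey]
      nlinarith
    · intro h
      nlinarith [hkey]
  refine ⟨hfirst, by rw [hkey], ?_, ?_⟩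
  · rw [hcent]
    unfold dBpure
    rw [Real.sqrt_le_sqrt_iff (by linarith)]
    constructor <;> intro h <;> linarith
  · rw [hcent]
    unfold dFS
    have hmem : Real.sqrt x ∈ Set.Icc (-1:ℝ) 1 := by
      constructor
      · linarith [Real.sqrt_nonneg x]
      · rw [show (1:ℝ) = Real.sqrt 1 by simp]
        exact Real.sqrt_le_sqrt hx1
    have hmem' : Real.sqrt x' ∈ Set.Icc (-1:ℝ) 1 := by
      constructor
      · linarith [Real.sqrt_nonneg x']
      · rw [show (1:ℝ) = Real.sqrt 1 by simp]
        exact Real.sqrt_le_sqrt hx1'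
    rw [Real.strictAntiOn_arccos.le_iff_ge hmem hmem',
      Real.sqrt_le_sqrt_iff hx0]
end
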